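/- Let X₁, X₂ be independent nonsingular real random variables with E[X₁²], E[X₂²] < ∞, and set Y₁ = (X₁+X₂)/√2, Y₂ = (X₁-X₂)/√2. Then the Rényi information dimensions satisfy d(Y₁) = 1 - (1 - d(X₁))(1 - d(X₂)) and d(Y₂|Y₁) = d(X₁)·d(X₂). -/

import Mathlib

open MeasureTheory ProbabilityTheory

/-- A measure on `ℝ` is nonsingular if its singular part w.r.t. Lebesgue measure is carried
by a countable set (purely atomic), i.e. there is no singular continuous component. -/
def Nonsingular (μ : Measure ℝ) : Prop :=
  ∃ s : Set ℝ, s.Countable ∧ μ.singularPart volume sᶜ = 0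

/-- The weight of the absolutely continuous component of a measure on `ℝ`; for a nonsingular
random variable with finite second moment this is its Rényi information dimension. -/
noncomputable def acWeight (μ : Measure ℝ) : ℝ :=
  (∫⁻ x, μ.rnDeriv volume x).toReal

lemma acWeight_eq (μ : Measure ℝ) :
    acWeight μ = ((volume.withDensity (μ.rnDeriv volume)) Set.univ).toReal := by
  rw [acWeight, withDensity_apply _ MeasurableSet.univ, setLIntegral_univ]

lemma ac_add {μ₁ μ₂ ν : Measure ℝ} (h1 : μ₁ ≪ ν) (h2 : μ₂ ≪ ν) : μ₁ + μ₂ ≪ ν := by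
  refine Measure.AbsolutelyContinuous.mk fun s hs hs0 => ?_
  simp [h1 hs0, h2 hs0]

lemma affine_preimage_null {s : Set ℝ} (hs : volume s = 0) (x : ℝ) :
    volume ((fun y => (x + y) / Real.sqrt 2) ⁻¹' s) = 0 := by
  have hsqrt : (Real.sqrt 2)⁻¹ ≠ 0 := by
    simp [Real.sqrt_eq_zero']
  have h : (fun y : ℝ => (x + y) / Real.sqrt 2)
      = (fun z => z + x / Real.sqrt 2) ∘ (fun y : ℝ => (Real.sqrt 2)⁻¹ • y) := by
    funext y
    simp only [Function.comp_apply, smul_eq_mul]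
    ring
  rw [h, Set.preimage_comp, Measure.addHaar_preimage_smul volume hsqrt,
    measure_preimage_add_right, hs, mul_zero]

lemma map_T_prod_ac (ρ η : Measure ℝ) [SFinite ρ] [SFinite η] (hη : η ≪ volume) :
    Measure.map (fun p : ℝ × ℝ => (p.1 + p.2) / Real.sqrt 2) (ρ.prod η) ≪ volume := by
  have hT : Measurable (fun p : ℝ × ℝ => (p.1 + p.2) / Real.sqrt 2) := by fun_prop
  refine Measure.AbsolutelyContinuous.mk fun s hs hs0 => ?_
  rw [Measure.map_apply hT hs, Measure.prod_apply (hT hs)]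
  have h : ∀ x : ℝ, η (Prod.mk x ⁻¹' ((fun p : ℝ × ℝ => (p.1 + p.2) / Real.sqrt 2) ⁻¹' s)) = 0 :=
    fun x => hη (affine_preimage_null hs0 x)
  simp [h]

lemma acWeight_of_decomp (μ ν ρ : Measure ℝ) [IsFiniteMeasure ν]
    (hν : ν ≪ volume) (hρ : ρ ⟂ₘ volume) (h : μ = ρ + ν) :
    acWeight μ = (ν Set.univ).toReal := by
  have hwd : volume.withDensity (ν.rnDeriv volume) = ν :=
    Measure.withDensity_rnDeriv_eq _ _ hν
  have h2 : volume.withDensity (ν.rnDeriv volume) = volume.withDensity (μ.rnDeriv volume) :=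
    Measure.eq_withDensity_rnDeriv (Measure.measurable_rnDeriv ν volume) hρ (by rw [h, hwd])
  rw [acWeight_eq, ← h2, hwd]

lemma singularPart_eq_of_equiv (μ : Measure ℝ) [IsFiniteMeasure μ] (ν ν' : Measure ℝ)
    [SigmaFinite ν] [SigmaFinite ν'] (h1 : ν ≪ ν') (h2 : ν' ≪ ν) :
    μ.singularPart ν = μ.singularPart ν' := by
  have hadd := μ.haveLebesgueDecomposition_add ν
  have hwd_ac : ν.withDensity (μ.rnDeriv ν) ≪ ν' :=
    (withDensity_absolutelyContinuous ν _).trans h1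
  have hsing : μ.singularPart ν ⟂ₘ ν' :=
    (Measure.mutuallySingular_singularPart μ ν).mono_ac .rfl h2
  refine Measure.eq_singularPart
    (Measure.measurable_rnDeriv (ν.withDensity (μ.rnDeriv ν)) ν') hsing ?_
  rw [Measure.withDensity_rnDeriv_eq _ _ hwd_ac]
  exact hadd

noncomputable def Rlin : (ℝ × ℝ) →ₗ[ℝ] (ℝ × ℝ) where
  toFun p := ((p.1 + p.2) / Real.sqrt 2, (p.1 - p.2) / Real.sqrt 2)
  map_add' a b := by
    simp only [Prod.fst_add, Prod.snd_add, Prod.mk_add_mk, Prod.mk.injEq]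
    constructor <;> ring
  map_smul' c a := by
    simp only [Prod.smul_fst, Prod.smul_snd, smul_eq_mul, Prod.smul_mk, RingHom.id_apply,
      Prod.mk.injEq]
    constructor <;> ring

lemma Rlin_det_ne : LinearMap.det Rlin ≠ 0 := by
  have h2 : Real.sqrt 2 * Real.sqrt 2 = 2 := Real.mul_self_sqrt (by norm_num)
  have hs : Real.sqrt 2 ≠ 0 := by
    intro h; rw [h, mul_zero] at h2; norm_num at h2
  rw [← LinearMap.det_toMatrix (Module.Basis.finTwoProd ℝ), Matrix.det_fin_two]
  simp only [LinearMap.toMatrix_apply, Module.Basis.finTwoProd_zero, Module.Basis.finTwoProd_one,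
    Module.Basis.coe_finTwoProd_repr, Rlin, LinearMap.coe_mk, AddHom.coe_mk]
  simp only [Matrix.cons_val_zero, Matrix.cons_val_one, Matrix.head_cons]
  intro h
  apply hs
  field_simp at h
  nlinarith [h2, Real.sqrt_nonneg 2]

lemma null_preimage_R {A : Set (ℝ × ℝ)} (hA : volume A = 0) :
    volume ((fun p : ℝ × ℝ => ((p.1 + p.2) / Real.sqrt 2, (p.1 - p.2) / Real.sqrt 2)) ⁻¹' A)
      = 0 := by
  have h : (fun p : ℝ × ℝ => ((p.1 + p.2) / Real.sqrt 2, (p.1 - p.2) / Real.sqrt 2)) = ⇑Rlin :=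
    rfl
  rw [h, Measure.addHaar_preimage_linearMap volume Rlin_det_ne, hA, mul_zero]

set_option maxHeartbeats 1000000

/-- Let `X₁, X₂` be independent nonsingular real random variables with finite second moments,
and `Y₁ = (X₁+X₂)/√2`, `Y₂ = (X₁-X₂)/√2`.  Then the Rényi information dimensions (which for
nonsingular laws with finite second moment equal the weights of the absolutely continuous
parts, conditionally for a.e. value of the conditioning variable) satisfy
`d(Y₁) = 1 - (1 - d(X₁))(1 - d(X₂))` and `d(Y₂|Y₁) = E_{y∼Y₁}[d(Y₂|Y₁=y)] = d(X₁)·d(X₂)`,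
where `κ` is (any) regular conditional distribution of `Y₂` given `Y₁`. -/
theorem rid_hadamard_transform {Ω : Type*} [MeasurableSpace Ω] (P : Measure Ω)
    [IsProbabilityMeasure P] (X₁ X₂ : Ω → ℝ)
    (hX₁ : Measurable X₁) (hX₂ : Measurable X₂)
    (hindep : IndepFun X₁ X₂ P)
    (hmom₁ : Integrable (fun ω => (X₁ ω) ^ 2) P)
    (hmom₂ : Integrable (fun ω => (X₂ ω) ^ 2) P)
    (hns₁ : Nonsingular (Measure.map X₁ P)) (hns₂ : Nonsingular (Measure.map X₂ P))
    (Y₁ Y₂ : Ω → ℝ)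
    (hY₁ : Y₁ = fun ω => (X₁ ω + X₂ ω) / Real.sqrt 2)
    (hY₂ : Y₂ = fun ω => (X₁ ω - X₂ ω) / Real.sqrt 2)
    (κ : Kernel ℝ ℝ) [IsMarkovKernel κ]
    (hκ : (Measure.map Y₁ P).compProd κ = Measure.map (fun ω => (Y₁ ω, Y₂ ω)) P) :
    acWeight (Measure.map Y₁ P)
        = 1 - (1 - acWeight (Measure.map X₁ P)) * (1 - acWeight (Measure.map X₂ P)) ∧
      ∫ y, acWeight (κ y) ∂(Measure.map Y₁ P)
        = acWeight (Measure.map X₁ P) * acWeight (Measure.map X₂ P) := by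
  have hsq2 : Real.sqrt 2 * Real.sqrt 2 = 2 := Real.mul_self_sqrt (by norm_num)
  have hs2ne : Real.sqrt 2 ≠ 0 := by
    intro h; rw [h, mul_zero] at hsq2; norm_num at hsq2
  set T : ℝ × ℝ → ℝ := fun p => (p.1 + p.2) / Real.sqrt 2 with hTdef
  have hT : Measurable T := by fun_prop
  set R : ℝ × ℝ → ℝ × ℝ :=
    fun p => ((p.1 + p.2) / Real.sqrt 2, (p.1 - p.2) / Real.sqrt 2) with hRdef
  have hR : Measurable R := by fun_prop
  set μ₁ := Measure.map X₁ P with hμ₁def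
  set μ₂ := Measure.map X₂ P with hμ₂def
  haveI : IsProbabilityMeasure μ₁ := Measure.isProbabilityMeasure_map hX₁.aemeasurable
  haveI : IsProbabilityMeasure μ₂ := Measure.isProbabilityMeasure_map hX₂.aemeasurable
  obtain ⟨s₁, hs₁c, hσ₁s⟩ := hns₁
  obtain ⟨s₂, hs₂c, hσ₂s⟩ := hns₂
  set α₁ := volume.withDensity (μ₁.rnDeriv volume) with hα₁def
  set σ₁ := μ₁.singularPart volume with hσ₁def
  set α₂ := volume.withDensity (μ₂.rnDeriv volume) with hα₂def
  set σ₂ := μ₂.singularPart volume with hσ₂def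
  have hα₁ac : α₁ ≪ volume := withDensity_absolutelyContinuous _ _
  have hα₂ac : α₂ ≪ volume := withDensity_absolutelyContinuous _ _
  have hdec₁ : μ₁ = σ₁ + α₁ := μ₁.haveLebesgueDecomposition_add volume
  have hdec₂ : μ₂ = σ₂ + α₂ := μ₂.haveLebesgueDecomposition_add volume
  have hmass₁ : σ₁ Set.univ + α₁ Set.univ = 1 := by
    rw [← Measure.add_apply, ← hdec₁]; exact measure_univ
  have hmass₂ : σ₂ Set.univ + α₂ Set.univ = 1 := by
    rw [← Measure.add_apply, ← hdec₂]; exact measure_univ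
  have hjoint : Measure.map (fun ω => (X₁ ω, X₂ ω)) P = μ₁.prod μ₂ :=
    (indepFun_iff_map_prod_eq_prod_map_map hX₁.aemeasurable hX₂.aemeasurable).mp hindep
  have hXm : Measurable (fun ω => (X₁ ω, X₂ ω)) := hX₁.prodMk hX₂
  subst hY₁ hY₂
  beta_reduce at hκ
  have hY₁law : Measure.map (fun ω => (X₁ ω + X₂ ω) / Real.sqrt 2) P
      = Measure.map T (μ₁.prod μ₂) := by
    have heq : (fun ω => (X₁ ω + X₂ ω) / Real.sqrt 2) = T ∘ (fun ω => (X₁ ω, X₂ ω)) := rfl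
    rw [heq, ← Measure.map_map hT hXm, hjoint]
  have hπlaw : Measure.map (fun ω => ((X₁ ω + X₂ ω) / Real.sqrt 2,
        (X₁ ω - X₂ ω) / Real.sqrt 2)) P = Measure.map R (μ₁.prod μ₂) := by
    have heq : (fun ω => ((X₁ ω + X₂ ω) / Real.sqrt 2, (X₁ ω - X₂ ω) / Real.sqrt 2))
        = R ∘ (fun ω => (X₁ ω, X₂ ω)) := rfl
    rw [heq, ← Measure.map_map hR hXm, hjoint]
  have hsplit : μ₁.prod μ₂ = σ₁.prod σ₂ + σ₁.prod α₂ + α₁.prod σ₂ + α₁.prod α₂ := by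
    calc μ₁.prod μ₂ = (σ₁ + α₁).prod (σ₂ + α₂) := by rw [← hdec₁, ← hdec₂]
      _ = σ₁.prod σ₂ + σ₁.prod α₂ + α₁.prod σ₂ + α₁.prod α₂ := by
        rw [Measure.add_prod, Measure.prod_add, Measure.prod_add]; abel
  -- Part 1
  have hswapT : Measure.map T (α₁.prod σ₂) = Measure.map T (σ₂.prod α₁) := by
    rw [← Measure.prod_swap, Measure.map_map hT measurable_swap]
    congr 1
    funext p
    simp only [Function.comp_apply, Prod.fst_swap, Prod.snd_swap, hTdef]
    ring
  set ν := Measure.map T (σ₁.prod α₂) + Measure.map T (α₁.prod σ₂)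
      + Measure.map T (α₁.prod α₂) with hνdef
  set ρ := Measure.map T (σ₁.prod σ₂) with hρdef
  have hμY : Measure.map (fun ω => (X₁ ω + X₂ ω) / Real.sqrt 2) P = ρ + ν := by
    rw [hY₁law, hsplit, Measure.map_add _ _ hT, Measure.map_add _ _ hT,
      Measure.map_add _ _ hT, hνdef, hρdef]
    abel
  have hνac : ν ≪ volume := by
    refine ac_add (ac_add ?_ ?_) ?_
    · exact map_T_prod_ac σ₁ α₂ hα₂ac
    · rw [hswapT]; exact map_T_prod_ac σ₂ α₁ hα₁ac
    · exact map_T_prod_ac α₁ α₂ hα₂ac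
  have hρsing : ρ ⟂ₘ volume := by
    have huc : (T '' (s₁ ×ˢ s₂)).Countable := (hs₁c.prod hs₂c).image _
    refine ⟨(T '' (s₁ ×ˢ s₂))ᶜ, huc.measurableSet.compl, ?_, by simp [huc.measure_zero]⟩
    rw [hρdef, Measure.map_apply hT huc.measurableSet.compl]
    refine measure_mono_null (fun p hp hmem => hp (Set.mem_image_of_mem T hmem)) ?_
    show (σ₁.prod σ₂) (s₁ ×ˢ s₂)ᶜ = 0
    rw [Set.compl_prod_eq_union]
    refine measure_union_null ?_ ?_
    · rw [Measure.prod_prod, hσ₁s, zero_mul]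
    · rw [Measure.prod_prod, hσ₂s, mul_zero]
  have hνuniv : ν Set.univ = σ₁ Set.univ * α₂ Set.univ + α₁ Set.univ * σ₂ Set.univ
      + α₁ Set.univ * α₂ Set.univ := by
    rw [hνdef, Measure.add_apply, Measure.add_apply,
      Measure.map_apply hT MeasurableSet.univ, Measure.map_apply hT MeasurableSet.univ,
      Measure.map_apply hT MeasurableSet.univ, Set.preimage_univ, ← Set.univ_prod_univ,
      Measure.prod_prod, Measure.prod_prod, Measure.prod_prod]
  have hacW₁ : acWeight μ₁ = (α₁ Set.univ).toReal := acWeight_eq μ₁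
  have hacW₂ : acWeight μ₂ = (α₂ Set.univ).toReal := acWeight_eq μ₂
  have hσt₁ : (σ₁ Set.univ).toReal = 1 - (α₁ Set.univ).toReal := by
    have h := congrArg ENNReal.toReal hmass₁
    rw [ENNReal.toReal_add (measure_ne_top _ _) (measure_ne_top _ _), ENNReal.toReal_one] at h
    linarith
  have hσt₂ : (σ₂ Set.univ).toReal = 1 - (α₂ Set.univ).toReal := by
    have h := congrArg ENNReal.toReal hmass₂
    rw [ENNReal.toReal_add (measure_ne_top _ _) (measure_ne_top _ _), ENNReal.toReal_one] at h
    linarith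
  have part1 : acWeight (Measure.map (fun ω => (X₁ ω + X₂ ω) / Real.sqrt 2) P)
      = 1 - (1 - acWeight μ₁) * (1 - acWeight μ₂) := by
    rw [acWeight_of_decomp _ ν ρ hνac hρsing hμY, hνuniv,
      ENNReal.toReal_add, ENNReal.toReal_add, ENNReal.toReal_mul, ENNReal.toReal_mul,
      ENNReal.toReal_mul, hacW₁, hacW₂, hσt₁, hσt₂]
    · ring
    · exact ENNReal.mul_ne_top (measure_ne_top _ _) (measure_ne_top _ _)
    · exact ENNReal.mul_ne_top (measure_ne_top _ _) (measure_ne_top _ _)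
    · exact ENNReal.add_ne_top.mpr ⟨ENNReal.mul_ne_top (measure_ne_top _ _) (measure_ne_top _ _),
        ENNReal.mul_ne_top (measure_ne_top _ _) (measure_ne_top _ _)⟩
    · exact ENNReal.mul_ne_top (measure_ne_top _ _) (measure_ne_top _ _)
  refine ⟨part1, ?_⟩
  -- Part 2
  haveI : IsProbabilityMeasure (Measure.map (fun ω => (X₁ ω + X₂ ω) / Real.sqrt 2) P) :=
    Measure.isProbabilityMeasure_map (((hX₁.add hX₂).div_const _).aemeasurable)
  set ν₀ : Measure ℝ := gaussianReal 0 1 with hν₀def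
  have hν₀ac : ν₀ ≪ volume := gaussianReal_absolutelyContinuous 0 one_ne_zero
  have hacν₀ : (volume : Measure ℝ) ≪ ν₀ := gaussianReal_absolutelyContinuous' 0 one_ne_zero
  set η : Kernel ℝ ℝ := Kernel.const ℝ ν₀ with hηdef
  have hηapp : ∀ y : ℝ, η y = ν₀ := fun y => Kernel.const_apply ν₀ y
  have hsp : ∀ y, (κ y).singularPart volume = (κ.singularPart η) y := by
    intro y
    rw [Kernel.singularPart_eq_singularPart_measure, hηapp]
    exact singularPart_eq_of_equiv (κ y) volume ν₀ hacν₀ hν₀ac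
  set g : ℝ → ENNReal := fun y => (κ.singularPart η) y Set.univ with hgdef
  have hgm : Measurable g := Kernel.measurable_coe _ MeasurableSet.univ
  have hgle : ∀ y, g y ≤ 1 := by
    intro y
    calc g y = (κ y).singularPart volume Set.univ := by rw [hsp y]
      _ ≤ κ y Set.univ := Measure.singularPart_le _ _ Set.univ
      _ = 1 := measure_univ
  have hacκ : ∀ y, acWeight (κ y) = (1 - g y).toReal := by
    intro y
    have hm : (κ y).singularPart volume Set.univ
        + volume.withDensity ((κ y).rnDeriv volume) Set.univ = 1 := by
      rw [← Measure.add_apply, ← (κ y).haveLebesgueDecomposition_add volume]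
      exact measure_univ
    rw [hsp y] at hm
    have hwdu : volume.withDensity ((κ y).rnDeriv volume) Set.univ = 1 - g y := by
      refine ENNReal.eq_sub_of_add_eq ((hgle y).trans_lt ENNReal.one_lt_top).ne ?_
      rw [add_comm]; exact hm
    rw [acWeight_eq, hwdu]
  set S : Set (ℝ × ℝ) := ((fun p : ℝ × ℝ => (p.1 + p.2) / Real.sqrt 2) ⁻¹' s₁)
      ∪ ((fun p : ℝ × ℝ => (p.1 - p.2) / Real.sqrt 2) ⁻¹' s₂) with hSdef
  have hSm : MeasurableSet S :=
    ((by fun_prop : Measurable fun p : ℝ × ℝ => (p.1 + p.2) / Real.sqrt 2)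
        hs₁c.measurableSet).union
      ((by fun_prop : Measurable fun p : ℝ × ℝ => (p.1 - p.2) / Real.sqrt 2)
        hs₂c.measurableSet)
  set A : Set (ℝ × ℝ) := Kernel.mutuallySingularSet κ η with hAdef
  have hA'm : MeasurableSet (A ∪ S) := (Kernel.measurableSet_mutuallySingularSet κ η).union hSm
  have hsliceA : ∀ y : ℝ, Prod.mk y ⁻¹' A = Kernel.mutuallySingularSetSlice κ η y :=
    fun y => rfl
  have hslice_vol : ∀ y : ℝ, volume (Prod.mk y ⁻¹' (A ∪ S)) = 0 := by
    intro y
    rw [Set.preimage_union]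
    refine measure_union_null ?_ ?_
    · rw [hsliceA]
      exact hacν₀ (by simpa [hηapp] using Kernel.measure_mutuallySingularSetSlice κ η y)
    · rw [hSdef, Set.preimage_union]
      refine measure_union_null ?_ ?_
      · refine measure_mono_null (fun z hz => ?_)
          (((hs₁c.image (fun c => Real.sqrt 2 * c - y)).measure_zero volume))
        exact ⟨(y + z) / Real.sqrt 2, hz, by field_simp; ring⟩
      · refine measure_mono_null (fun z hz => ?_)
          (((hs₂c.image (fun c => y - Real.sqrt 2 * c)).measure_zero volume))
        exact ⟨(y - z) / Real.sqrt 2, hz, by field_simp; ring⟩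
  have hκslice : ∀ y, κ y (Prod.mk y ⁻¹' (A ∪ S)) = g y := by
    intro y
    have hν₀slice : ν₀ (Prod.mk y ⁻¹' (A ∪ S)) = 0 := hν₀ac (hslice_vol y)
    have happ := congrArg (fun k : Kernel ℝ ℝ => k y (Prod.mk y ⁻¹' (A ∪ S)))
      (Kernel.rnDeriv_add_singularPart κ η)
    simp only [Kernel.add_apply, Measure.add_apply] at happ
    have h1 : (η.withDensity (κ.rnDeriv η)) y (Prod.mk y ⁻¹' (A ∪ S)) = 0 := by
      rw [Kernel.withDensity_apply _ (κ.measurable_rnDeriv η)]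
      exact (withDensity_absolutelyContinuous _ _) (by rwa [hηapp])
    have h2 : (κ.singularPart η) y (Prod.mk y ⁻¹' (A ∪ S)) = g y := by
      refine le_antisymm (measure_mono (Set.subset_univ _)) ?_
      have hcompl : (κ.singularPart η) y ((Prod.mk y ⁻¹' (A ∪ S))ᶜ) = 0 := by
        refine Kernel.singularPart_of_subset_compl_mutuallySingularSetSlice ?_
        intro z hz hzs
        exact hz (Or.inl (show (y, z) ∈ A from hzs))
      have hle := measure_union_le (μ := (κ.singularPart η) y)
        (Prod.mk y ⁻¹' (A ∪ S)) ((Prod.mk y ⁻¹' (A ∪ S))ᶜ)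
      rw [Set.union_compl_self, hcompl, add_zero] at hle
      exact hle
    rw [← happ, h1, h2, zero_add]
  have hRS₁ : ∀ p : ℝ × ℝ, p.1 ∈ s₁ → R p ∈ S := by
    intro p hp
    refine Or.inl ?_
    show ((p.1 + p.2) / Real.sqrt 2 + (p.1 - p.2) / Real.sqrt 2) / Real.sqrt 2 ∈ s₁
    have : ((p.1 + p.2) / Real.sqrt 2 + (p.1 - p.2) / Real.sqrt 2) / Real.sqrt 2 = p.1 := by
      field_simp
      rw [sq, hsq2]; ring
    rwa [this]
  have hRS₂ : ∀ p : ℝ × ℝ, p.2 ∈ s₂ → R p ∈ S := by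
    intro p hp
    refine Or.inr ?_
    show ((p.1 + p.2) / Real.sqrt 2 - (p.1 - p.2) / Real.sqrt 2) / Real.sqrt 2 ∈ s₂
    have : ((p.1 + p.2) / Real.sqrt 2 - (p.1 - p.2) / Real.sqrt 2) / Real.sqrt 2 = p.2 := by
      field_simp
      rw [sq, hsq2]; ring
    rwa [this]
  have hcarry₁ : ∀ (m : Measure (ℝ × ℝ)), m (s₁ᶜ ×ˢ (Set.univ : Set ℝ)) = 0 →
      Measure.map R m (A ∪ S) = m Set.univ := by
    intro m hm
    rw [Measure.map_apply hR hA'm, ← measure_add_measure_compl (hR hA'm)]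
    have h0 : m ((R ⁻¹' (A ∪ S))ᶜ) = 0 := by
      refine measure_mono_null (fun p hp => ?_) hm
      exact ⟨fun hmem => hp (Or.inr (hRS₁ p hmem)), trivial⟩
    rw [h0, add_zero]
  have hcarry₂ : ∀ (m : Measure (ℝ × ℝ)), m ((Set.univ : Set ℝ) ×ˢ s₂ᶜ) = 0 →
      Measure.map R m (A ∪ S) = m Set.univ := by
    intro m hm
    rw [Measure.map_apply hR hA'm, ← measure_add_measure_compl (hR hA'm)]
    have h0 : m ((R ⁻¹' (A ∪ S))ᶜ) = 0 := by
      refine measure_mono_null (fun p hp => ?_) hm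
      exact ⟨trivial, fun hmem => hp (Or.inr (hRS₂ p hmem))⟩
    rw [h0, add_zero]
  have hαα : Measure.map R (α₁.prod α₂) (A ∪ S) = 0 := by
    have hvol2 : (volume : Measure (ℝ × ℝ)) (A ∪ S) = 0 := by
      rw [Measure.volume_eq_prod, Measure.prod_apply hA'm]
      have hz : ∀ x : ℝ, (volume : Measure ℝ) (Prod.mk x ⁻¹' A ∪ Prod.mk x ⁻¹' S) = 0 :=
        fun x => by rw [← Set.preimage_union]; exact hslice_vol x
      simp [hz]
    rw [Measure.map_apply hR hA'm]
    exact (hα₁ac.prod hα₂ac) (by rw [← Measure.volume_eq_prod]; exact null_preimage_R hvol2)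
  have hπA : Measure.map R (μ₁.prod μ₂) (A ∪ S)
      = σ₁ Set.univ * σ₂ Set.univ + σ₁ Set.univ * α₂ Set.univ
        + α₁ Set.univ * σ₂ Set.univ := by
    rw [hsplit, Measure.map_add _ _ hR, Measure.map_add _ _ hR, Measure.map_add _ _ hR,
      Measure.add_apply, Measure.add_apply, Measure.add_apply, hαα,
      hcarry₁ (σ₁.prod σ₂) (by rw [Measure.prod_prod, hσ₁s, zero_mul]),
      hcarry₁ (σ₁.prod α₂) (by rw [Measure.prod_prod, hσ₁s, zero_mul]),
      hcarry₂ (α₁.prod σ₂) (by rw [Measure.prod_prod, hσ₂s, mul_zero]),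
      add_zero, ← Set.univ_prod_univ, Measure.prod_prod, Measure.prod_prod,
      Measure.prod_prod]
  have haatop : α₁ Set.univ * α₂ Set.univ ≠ ⊤ :=
    ENNReal.mul_ne_top (measure_ne_top _ _) (measure_ne_top _ _)
  have hπA' : Measure.map R (μ₁.prod μ₂) (A ∪ S) = 1 - α₁ Set.univ * α₂ Set.univ := by
    rw [hπA]
    refine (ENNReal.eq_sub_of_add_eq haatop ?_)
    calc σ₁ Set.univ * σ₂ Set.univ + σ₁ Set.univ * α₂ Set.univ + α₁ Set.univ * σ₂ Set.univ
          + α₁ Set.univ * α₂ Set.univ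
        = (σ₁ Set.univ + α₁ Set.univ) * (σ₂ Set.univ + α₂ Set.univ) := by ring
      _ = 1 := by rw [hmass₁, hmass₂, one_mul]
  have hint : ∫⁻ y, g y ∂(Measure.map (fun ω => (X₁ ω + X₂ ω) / Real.sqrt 2) P)
      = 1 - α₁ Set.univ * α₂ Set.univ := by
    calc ∫⁻ y, g y ∂(Measure.map (fun ω => (X₁ ω + X₂ ω) / Real.sqrt 2) P)
        = ∫⁻ y, κ y (Prod.mk y ⁻¹' (A ∪ S))
            ∂(Measure.map (fun ω => (X₁ ω + X₂ ω) / Real.sqrt 2) P) :=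
          lintegral_congr fun y => (hκslice y).symm
      _ = (Measure.map (fun ω => (X₁ ω + X₂ ω) / Real.sqrt 2) P ⊗ₘ κ) (A ∪ S) :=
          (Measure.compProd_apply hA'm).symm
      _ = Measure.map R (μ₁.prod μ₂) (A ∪ S) := by rw [hκ, ← hπlaw]
      _ = 1 - α₁ Set.univ * α₂ Set.univ := hπA'
  have hgint_ne : ∫⁻ y, g y ∂(Measure.map (fun ω => (X₁ ω + X₂ ω) / Real.sqrt 2) P) ≠ ⊤ := by
    rw [hint]
    exact (tsub_le_self.trans_lt ENNReal.one_lt_top).ne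
  have haale : α₁ Set.univ * α₂ Set.univ ≤ 1 := by
    calc α₁ Set.univ * α₂ Set.univ ≤ 1 * 1 := by
          refine mul_le_mul' ?_ ?_
          · rw [← hmass₁]; exact le_add_self
          · rw [← hmass₂]; exact le_add_self
      _ = 1 := one_mul 1
  calc ∫ y, acWeight (κ y) ∂(Measure.map (fun ω => (X₁ ω + X₂ ω) / Real.sqrt 2) P)
      = ∫ y, (1 - g y).toReal ∂(Measure.map (fun ω => (X₁ ω + X₂ ω) / Real.sqrt 2) P) := by
        simp only [hacκ]
    _ = (∫⁻ y, (1 - g y) ∂(Measure.map (fun ω => (X₁ ω + X₂ ω) / Real.sqrt 2) P)).toReal := by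
        refine integral_toReal ((measurable_const.sub hgm).aemeasurable) ?_
        exact ae_of_all _ fun y => tsub_le_self.trans_lt ENNReal.one_lt_top
    _ = acWeight μ₁ * acWeight μ₂ := by
        rw [lintegral_sub hgm hgint_ne (ae_of_all _ hgle), lintegral_one, measure_univ, hint,
          ENNReal.sub_sub_cancel ENNReal.one_ne_top haale, ENNReal.toReal_mul, hacW₁, hacW₂]
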